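/- Let λ_0, λ_1 > 0. The function p ↦ 2H(p)/(2pλ_1 + (2-p)λ_0) attains its maximum over [0,1] at the unique p ∈ (0,1) satisfying p^{2λ_0} = (1-p)^{2λ_1+λ_0}, and at no other point of [0,1]. -/

import Mathlib

open Filter Set MeasureTheory
open scoped ENNReal

/-- The entropy function `H(p) = -p log p - (1-p) log(1-p)` (with `H(0) = H(1) = 0`,
which holds automatically since `Real.log 0 = 0`). -/
noncomputable def Hent (p : ℝ) : ℝ := -p * Real.log p - (1 - p) * Real.log (1 - p)

section aux
variable (lam0 lam1 : ℝ)

noncomputable def gfn (x : ℝ) : ℝ :=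
  (2 * lam1 + lam0) * Real.log (1 - x) - 2 * lam0 * Real.log x

noncomputable def Dfn (x : ℝ) : ℝ := 2 * x * lam1 + (2 - x) * lam0

variable {lam0 lam1 : ℝ}

lemma Dpos (h0 : 0 < lam0) (h1 : 0 < lam1) {x : ℝ} (hx : x ∈ Set.Icc (0:ℝ) 1) : 0 < Dfn lam0 lam1 x := by
  have := hx.1; have := hx.2
  unfold Dfn; nlinarith

lemma g_anti (h0 : 0 < lam0) (h1 : 0 < lam1) : StrictAntiOn (gfn lam0 lam1) (Set.Ioo 0 1) := by
  intro x hx y hy hxy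
  have h2 : Real.log x < Real.log y := Real.log_lt_log hx.1 hxy
  have h3 : Real.log (1 - y) < Real.log (1 - x) := Real.log_lt_log (by linarith [hy.2]) (by linarith)
  have hc : (0:ℝ) < 2 * lam1 + lam0 := by linarith
  unfold gfn
  nlinarith [mul_lt_mul_of_pos_left h3 hc, mul_lt_mul_of_pos_left h2 h0]

lemma g_cont : ContinuousOn (gfn lam0 lam1) (Set.Ioo 0 1) := by
  apply ContinuousOn.sub
  · exact continuousOn_const.mul ((Real.continuousOn_log.comp
      (by fun_prop) (fun x hx => by simp; intro h; linarith [hx.2, h]) ))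
  · exact continuousOn_const.mul (Real.continuousOn_log.mono
      (fun x hx => by simp; exact ne_of_gt hx.1))

lemma g_root_exists (h0 : 0 < lam0) (h1 : 0 < lam1) : ∃ p ∈ Set.Ioo (0:ℝ) 1, gfn lam0 lam1 p = 0 := by
  -- find a near 0 with g a > 0
  have htop : Tendsto (gfn lam0 lam1) (nhdsWithin 0 (Set.Ioi 0)) atTop := by
    have l1 : Tendsto (fun x : ℝ => (2 * lam1 + lam0) * Real.log (1 - x))
        (nhdsWithin 0 (Set.Ioi 0)) (nhds 0) := by
      have : Tendsto (fun x : ℝ => (2 * lam1 + lam0) * Real.log (1 - x)) (nhds 0) (nhds 0) := by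
        have := ((Real.continuousAt_log (by norm_num : (1:ℝ) - 0 ≠ 0)).comp
          (by fun_prop : ContinuousAt (fun x : ℝ => 1 - x) 0)).const_smul (2 * lam1 + lam0)
        simpa [Function.comp_def, Pi.smul_def] using this.tendsto
      exact this.mono_left nhdsWithin_le_nhds
    have l2 : Tendsto (fun x : ℝ => -(2 * lam0 * Real.log x)) (nhdsWithin 0 (Set.Ioi 0)) atTop := by
      have := Real.tendsto_log_nhdsGT_zero
      have h := this.const_mul_atBot (by linarith : (0:ℝ) < 2 * lam0)
      exact tendsto_neg_atBot_atTop.comp h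
    have : Tendsto (fun x => (2 * lam1 + lam0) * Real.log (1 - x) + -(2 * lam0 * Real.log x))
        (nhdsWithin 0 (Set.Ioi 0)) atTop := l1.add_atTop l2
    unfold gfn; simpa [sub_eq_add_neg] using this
  have hbot : Tendsto (gfn lam0 lam1) (nhdsWithin 1 (Set.Iio 1)) atBot := by
    have m1 : Tendsto (fun x : ℝ => 1 - x) (nhdsWithin 1 (Set.Iio 1)) (nhdsWithin 0 (Set.Ioi 0)) := by
      apply tendsto_nhdsWithin_of_tendsto_nhds_of_eventually_within
      · have : Tendsto (fun x : ℝ => 1 - x) (nhds 1) (nhds 0) := by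
          have : ContinuousAt (fun x : ℝ => 1 - x) 1 := by fun_prop
          simpa using this.tendsto
        exact this.mono_left nhdsWithin_le_nhds
      · filter_upwards [self_mem_nhdsWithin] with x hx
        simp at hx ⊢; linarith
    have l1 : Tendsto (fun x : ℝ => (2 * lam1 + lam0) * Real.log (1 - x))
        (nhdsWithin 1 (Set.Iio 1)) atBot :=
      (Real.tendsto_log_nhdsGT_zero.comp m1).const_mul_atBot (by linarith)
    have l2 : Tendsto (fun x : ℝ => -(2 * lam0 * Real.log x)) (nhdsWithin 1 (Set.Iio 1)) (nhds 0) := by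
      have : ContinuousAt (fun x : ℝ => -(2 * lam0 * Real.log x)) 1 := by
        have := Real.continuousAt_log (by norm_num : (1:ℝ) ≠ 0)
        fun_prop (disch := norm_num)
      simpa using (this.tendsto).mono_left nhdsWithin_le_nhds
    have h2 : Tendsto (fun x => (2 * lam1 + lam0) * Real.log (1 - x) + -(2 * lam0 * Real.log x))
        (nhdsWithin 1 (Set.Iio 1)) atBot := Tendsto.atBot_add l1 l2
    unfold gfn; simpa [sub_eq_add_neg] using h2
  obtain ⟨a, ha, hga⟩ : ∃ a, a ∈ Set.Ioo (0:ℝ) (1/2) ∧ 0 < gfn lam0 lam1 a := by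
    have h := (htop.eventually (eventually_gt_atTop 0)).and
      (Ioo_mem_nhdsGT_of_mem (by norm_num : (0:ℝ) ∈ Set.Ico 0 (1/2)))
    obtain ⟨a, h1', h2'⟩ := h.exists
    exact ⟨a, h2', h1'⟩
  obtain ⟨b, hb, hgb⟩ : ∃ b, b ∈ Set.Ioo (1/2:ℝ) 1 ∧ gfn lam0 lam1 b < 0 := by
    have h := (hbot.eventually (eventually_lt_atBot 0)).and
      (Ioo_mem_nhdsLT_of_mem (by norm_num : (1:ℝ) ∈ Set.Ioc (1/2) 1))
    obtain ⟨b, h1', h2'⟩ := h.exists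
    exact ⟨b, h2', h1'⟩
  have hab : a ≤ b := by linarith [ha.2, hb.1]
  have hsub : Set.Icc a b ⊆ Set.Ioo (0:ℝ) 1 := fun x hx =>
    ⟨lt_of_lt_of_le ha.1 hx.1, lt_of_le_of_lt hx.2 hb.2⟩
  have := intermediate_value_Icc' hab ((g_cont (lam0 := lam0) (lam1 := lam1)).mono hsub)
  obtain ⟨p, hp, hgp⟩ := this ⟨le_of_lt hgb, le_of_lt hga⟩
  exact ⟨p, hsub hp, hgp⟩

end aux

section aux2
variable {lam0 lam1 : ℝ}

lemma hasDerivHent {x : ℝ} (hx : x ∈ Set.Ioo (0:ℝ) 1) :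
    HasDerivAt Hent (Real.log (1 - x) - Real.log x) x := by
  have h1 := Real.hasDerivAt_negMulLog (ne_of_gt hx.1)
  have h2 := (Real.hasDerivAt_negMulLog (x := 1 - x)
      (by have := hx.2; intro h; linarith)).comp x
      ((hasDerivAt_id x).const_sub 1)
  have he : Hent = fun y => Real.negMulLog y + Real.negMulLog (1 - y) := by
    funext y; simp [Hent, Real.negMulLog]; ring
  rw [he]
  refine (h1.add h2).congr_deriv ?_
  ring

lemma hasDerivF (h0 : 0 < lam0) (h1 : 0 < lam1) {x : ℝ} (hx : x ∈ Set.Ioo (0:ℝ) 1) :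
    HasDerivAt (fun y => 2 * Hent y / Dfn lam0 lam1 y)
      (2 * gfn lam0 lam1 x / (Dfn lam0 lam1 x) ^ 2) x := by
  have hD : HasDerivAt (fun y : ℝ => 2 * y * lam1 + (2 - y) * lam0) (2 * lam1 - lam0) x := by
    have ha := ((hasDerivAt_id x).const_mul 2).mul_const lam1
    have hb := ((hasDerivAt_id x).const_sub 2).mul_const lam0
    refine (ha.add hb).congr_deriv ?_; ring
  have hDne : Dfn lam0 lam1 x ≠ 0 := ne_of_gt (Dpos h0 h1 (Set.mem_Icc_of_Ioo hx))
  have hH := (hasDerivHent hx).const_mul 2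
  have := hH.div hD hDne
  refine this.congr_deriv ?_
  have hx0 := hx.1; have hx1 := hx.2
  rw [div_eq_div_iff (by positivity) (by positivity)]
  unfold gfn Dfn Hent
  ring

lemma F_cont (h0 : 0 < lam0) (h1 : 0 < lam1) :
    ContinuousOn (fun y => 2 * Hent y / Dfn lam0 lam1 y) (Set.Icc (0:ℝ) 1) := by
  apply ContinuousOn.div
  · have he : (fun y => 2 * Hent y) = fun y => 2 * (Real.negMulLog y + Real.negMulLog (1 - y)) := by
      funext y; simp [Hent, Real.negMulLog]; ring
    rw [he]
    exact (continuous_const.mul (Real.continuous_negMulLog.add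
      (Real.continuous_negMulLog.comp (continuous_const.sub continuous_id)))).continuousOn
  · unfold Dfn; fun_prop
  · exact fun x hx => ne_of_gt (Dpos h0 h1 hx)

lemma F_max (h0 : 0 < lam0) (h1 : 0 < lam1) {p : ℝ} (hp : p ∈ Set.Ioo (0:ℝ) 1)
    (hgp : gfn lam0 lam1 p = 0) :
    ∀ x ∈ Set.Icc (0:ℝ) 1, x ≠ p →
      2 * Hent x / Dfn lam0 lam1 x < 2 * Hent p / Dfn lam0 lam1 p := by
  set F := fun y => 2 * Hent y / Dfn lam0 lam1 y with hF
  have hmono : StrictMonoOn F (Set.Icc 0 p) := by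
    apply strictMonoOn_of_deriv_pos (convex_Icc 0 p)
      ((F_cont h0 h1).mono (Set.Icc_subset_Icc le_rfl (le_of_lt hp.2)))
    intro x hx
    rw [interior_Icc] at hx
    have hx' : x ∈ Set.Ioo (0:ℝ) 1 := ⟨hx.1, lt_trans hx.2 hp.2⟩
    rw [(hasDerivF h0 h1 hx').deriv]
    have hg : 0 < gfn lam0 lam1 x := by
      have := g_anti h0 h1 hx' hp hx.2
      linarith
    have hD := Dpos h0 h1 (Set.mem_Icc_of_Ioo hx')
    positivity
  have hanti : StrictAntiOn F (Set.Icc p 1) := by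
    apply strictAntiOn_of_deriv_neg (convex_Icc p 1)
      ((F_cont h0 h1).mono (Set.Icc_subset_Icc (le_of_lt hp.1) le_rfl))
    intro x hx
    rw [interior_Icc] at hx
    have hx' : x ∈ Set.Ioo (0:ℝ) 1 := ⟨lt_trans hp.1 hx.1, hx.2⟩
    rw [(hasDerivF h0 h1 hx').deriv]
    have hg : gfn lam0 lam1 x < 0 := by
      have := g_anti h0 h1 hp hx' hx.1
      linarith
    have hD := Dpos h0 h1 (Set.mem_Icc_of_Ioo hx')
    have : (0:ℝ) < (Dfn lam0 lam1 x) ^ 2 := by positivity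
    exact div_neg_of_neg_of_pos (by linarith) this
  intro x hx hne
  rcases lt_or_gt_of_ne hne with h | h
  · exact hmono ⟨hx.1, le_of_lt h⟩ ⟨le_of_lt hp.1, le_rfl⟩ h
  · exact hanti ⟨le_rfl, le_of_lt hp.2⟩ ⟨le_of_lt h, hx.2⟩ h

lemma rpow_iff_g {p : ℝ} (hp : p ∈ Set.Ioo (0:ℝ) 1) :
    p ^ (2 * lam0) = (1 - p) ^ (2 * lam1 + lam0) ↔ gfn lam0 lam1 p = 0 := by
  rw [Real.rpow_def_of_pos hp.1, Real.rpow_def_of_pos (by linarith [hp.2] : (0:ℝ) < 1 - p),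
    Real.exp_eq_exp]
  unfold gfn
  constructor <;> intro h <;> linarith

end aux2

/-- For `λ₀, λ₁ > 0`, the function `p ↦ 2H(p)/(2pλ₁ + (2-p)λ₀)` attains its maximum over
`[0,1]` at the unique `p ∈ (0,1)` with `p^{2λ₀} = (1-p)^{2λ₁+λ₀}`, and at no other point. -/
theorem stmt10 (lam0 lam1 : ℝ) (h0 : 0 < lam0) (h1 : 0 < lam1) :
    (∃! p : ℝ, p ∈ Set.Ioo (0 : ℝ) 1 ∧
        p ^ (2 * lam0) = (1 - p) ^ (2 * lam1 + lam0)) ∧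
    ∀ p : ℝ, p ∈ Set.Ioo (0 : ℝ) 1 → p ^ (2 * lam0) = (1 - p) ^ (2 * lam1 + lam0) →
      (∀ x ∈ Set.Icc (0 : ℝ) 1,
        2 * Hent x / (2 * x * lam1 + (2 - x) * lam0) ≤
          2 * Hent p / (2 * p * lam1 + (2 - p) * lam0)) ∧
      (∀ x ∈ Set.Icc (0 : ℝ) 1, x ≠ p →
        2 * Hent x / (2 * x * lam1 + (2 - x) * lam0) <
          2 * Hent p / (2 * p * lam1 + (2 - p) * lam0)) := by
  obtain ⟨p0, hp0, hg0⟩ := g_root_exists h0 h1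
  refine ⟨⟨p0, ⟨hp0, (rpow_iff_g hp0).mpr hg0⟩, ?_⟩, ?_⟩
  · rintro q ⟨hq, hqe⟩
    have hgq := (rpow_iff_g hq).mp hqe
    by_contra hne
    rcases lt_or_gt_of_ne hne with h | h
    · have := g_anti h0 h1 hq hp0 h; rw [hg0, hgq] at this; exact lt_irrefl 0 this
    · have := g_anti h0 h1 hp0 hq h; rw [hg0, hgq] at this; exact lt_irrefl 0 this
  · intro p hp hpe
    have hgp := (rpow_iff_g hp).mp hpe
    have hmax := F_max h0 h1 hp hgp
    constructor
    · intro x hx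
      by_cases hxp : x = p
      · subst hxp; exact le_rfl
      · exact le_of_lt (hmax x hx hxp)
    · exact fun x hx hxp => hmax x hx hxp
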